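/- Let N(m) be the number of isomorphism classes of maximal Arrow's single-peaked domains on a set of size m, let P(m) be the number of maximal Arrow's single-peaked domains on a fixed set of size m that contain a fixed linear order as an extremal order, and let SP(m) be the number of isomorphism classes of self-paired maximal Arrow's single-peaked domains on a set of size m. Then N(3) = SP(3) = 1, and for all m ≥ 4: N(m) = (P(m) + SP(m))/2, and consequently P(m)/2 ≤ N(m) ≤ P(m). -/

import Mathlib

/-- A list `l` represents a linear order on the finite set `A`:
it is duplicate-free and its members are exactly the elements of `A`,
listed from most to least preferred. -/
def IsLinOrd {α : Type*} (A : Finset α) (l : List α) : Prop :=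
  l.Nodup ∧ ∀ a : α, a ∈ l ↔ a ∈ A

/-- The restriction of the order `l` to the subset `S`. -/
def restrictList {α : Type*} [DecidableEq α] (l : List α) (S : Finset α) : List α :=
  l.filter (fun a => a ∈ S)

/-- The domain contraction of `D` on `S`: the set of restrictions to `S`
of the orders in `D` (as a set, so duplicates are automatically removed). -/
def contraction {α : Type*} [DecidableEq α] (D : Set (List α)) (S : Finset α) :
    Set (List α) :=
  (fun l => restrictList l S) '' D

/-- `D` contains a Condorcet triple: elements `a, b, c` and orders
`v₁, v₂, v₃ ∈ D` restricting on `{a,b,c}` to `a≻b≻c`, `b≻c≻a`, `c≻a≻b`. -/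
def CondorcetTriple {α : Type*} [DecidableEq α] (D : Set (List α)) : Prop :=
  ∃ a b c : α, a ≠ b ∧ a ≠ c ∧ b ≠ c ∧
    ∃ v₁ ∈ D, ∃ v₂ ∈ D, ∃ v₃ ∈ D,
      restrictList v₁ {a, b, c} = [a, b, c] ∧
      restrictList v₂ {a, b, c} = [b, c, a] ∧
      restrictList v₃ {a, b, c} = [c, a, b]

/-- A Condorcet domain on `A`: a set of linear orders on `A` with no Condorcet triple. -/
def IsCondorcetDomain {α : Type*} [DecidableEq α] (A : Finset α) (D : Set (List α)) : Prop :=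
  (∀ l ∈ D, IsLinOrd A l) ∧ ¬ CondorcetTriple D

/-- A maximal Condorcet domain on `A`: no strict superset is a Condorcet domain on `A`. -/
def IsMaxCondorcetDomain {α : Type*} [DecidableEq α] (A : Finset α) (D : Set (List α)) : Prop :=
  IsCondorcetDomain A D ∧ ∀ D' : Set (List α), IsCondorcetDomain A D' → D ⊆ D' → D' = D

/-- `x` is a never-bottom element of the triple `T` for `D`:
no order of `D` ranks `x` below both other elements of `T`. -/
def NeverBottom {α : Type*} [DecidableEq α] (D : Set (List α)) (T : Finset α) (x : α) : Prop :=
  x ∈ T ∧ ∀ l ∈ D, (restrictList l T).getLast? ≠ some x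

/-- An Arrow's single-peaked domain on `A`: a Condorcet domain such that every
3-element subset of `A` has a never-bottom element. -/
def IsArrowSP {α : Type*} [DecidableEq α] (A : Finset α) (D : Set (List α)) : Prop :=
  IsCondorcetDomain A D ∧
    ∀ T : Finset α, T ⊆ A → T.card = 3 → ∃ x : α, NeverBottom D T x

/-- A maximal Arrow's single-peaked domain on `A`. -/
def IsMaxArrowSP {α : Type*} [DecidableEq α] (A : Finset α) (D : Set (List α)) : Prop :=
  IsMaxCondorcetDomain A D ∧ IsArrowSP A D

/-- `a` is a terminal element of `D`: some order of `D` ends with (least element) `a`. -/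
def TerminalElt {α : Type*} (D : Set (List α)) (a : α) : Prop :=
  ∃ l ∈ D, l.getLast? = some a

/-- `l` is an extremal order of `D`: `l ∈ D`, and the first and last elements of `l`
are the two terminal elements of `D`. -/
def IsExtremal {α : Type*} (D : Set (List α)) (l : List α) : Prop :=
  l ∈ D ∧ ∃ s t : α, s ≠ t ∧ l.head? = some s ∧ l.getLast? = some t ∧
    TerminalElt D s ∧ TerminalElt D t ∧ ∀ a : α, TerminalElt D a → a = s ∨ a = t

/-- The position of `a` in the order `l`, the first element being in position 1. -/
def posIn {α : Type*} [DecidableEq α] (l : List α) (a : α) : ℕ :=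
  l.idxOf a + 1

/-- `numMaxASP m` is the number of maximal Arrow's single-peaked domains on a fixed
set of size `m` containing a fixed linear order (`0 < 1 < ⋯ < m-1` on `Fin m`) as an
extremal order. -/
noncomputable def numMaxASP (m : ℕ) : ℕ :=
  {D : Set (List (Fin m)) | IsMaxArrowSP Finset.univ D ∧
    IsExtremal D (List.finRange m)}.ncard

/-- `D` is self-paired: its inherited permutation (the permutation sending one of its
two extremal orders to the other) maps `D` onto itself. -/
def SelfPaired {α : Type*} [DecidableEq α] (D : Set (List α)) : Prop :=
  ∃ (P Q : List α) (θ : Equiv.Perm α), P ≠ Q ∧ IsExtremal D P ∧ IsExtremal D Q ∧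
    (∀ l : List α, IsExtremal D l → l = P ∨ l = Q) ∧ P.map θ = Q ∧
    (fun l : List α => l.map θ) '' D = D

/-- `numIsoClasses m`: the number of isomorphism classes of maximal Arrow's
single-peaked domains on a set of size `m`. -/
noncomputable def numIsoClasses (m : ℕ) : ℕ :=
  {C : Set (Set (List (Fin m))) | ∃ D : Set (List (Fin m)),
    IsMaxArrowSP Finset.univ D ∧
    C = {D' | ∃ φ : Equiv.Perm (Fin m), (fun l : List (Fin m) => l.map φ) '' D = D'}}.ncard

/-- `numSPClasses m`: the number of isomorphism classes of self-paired maximal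
Arrow's single-peaked domains on a set of size `m`. -/
noncomputable def numSPClasses (m : ℕ) : ℕ :=
  {C : Set (Set (List (Fin m))) | ∃ D : Set (List (Fin m)),
    IsMaxArrowSP Finset.univ D ∧ SelfPaired D ∧
    C = {D' | ∃ φ : Equiv.Perm (Fin m), (fun l : List (Fin m) => l.map φ) '' D = D'}}.ncard

set_option linter.unusedSectionVars false
section ListLemmas
variable {α : Type*} [DecidableEq α]

lemma mem_restrictList {l : List α} {S : Finset α} {a : α} :
    a ∈ restrictList l S ↔ a ∈ l ∧ a ∈ S := by
  simp [restrictList, List.mem_filter]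

lemma restrictList_nodup {l : List α} (h : l.Nodup) (S : Finset α) :
    (restrictList l S).Nodup := h.filter _

lemma mem_of_getLast?_eq {l : List α} {a : α} (h : l.getLast? = some a) : a ∈ l := by
  induction l with
  | nil => simp at h
  | cons b t ih =>
    cases ht : t.getLast? with
    | none =>
      cases t with
      | nil => simp_all
      | cons c u => simp [List.getLast?_cons] at ht
    | some x =>
      rw [List.getLast?_cons, ht] at h
      simp only [Option.getD_some, Option.some_inj] at h
      subst h; exact List.mem_cons_of_mem _ (ih ht)

lemma getLast?_cons_of_eq {t : List α} {x a : α} (h : t.getLast? = some x) :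
    (a :: t).getLast? = some x := by simp [List.getLast?_cons, h]

lemma getLast?_cons_ne_nil {t : List α} {a : α} (h : t ≠ []) :
    (a :: t).getLast? = t.getLast? := by
  cases ht : t.getLast? with
  | none => cases t with
    | nil => simp_all
    | cons c u => exfalso; rw [List.getLast?_eq_getLast (l := c :: u) (by simp)] at ht; simp at ht
  | some x => exact getLast?_cons_of_eq ht

lemma getLast?_filter {p : α → Bool} {x : α} :
    ∀ {l : List α}, l.getLast? = some x → p x → (l.filter p).getLast? = some x := by
  intro l
  induction l with
  | nil => intro h; simp at h
  | cons a t ih =>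
    intro h hp
    cases t with
    | nil =>
      simp at h; subst h
      simp [List.filter, hp]
    | cons b u =>
      rw [getLast?_cons_ne_nil (by simp)] at h
      have h2 := ih h hp
      rw [List.filter_cons]
      split
      · exact getLast?_cons_of_eq h2
      · exact h2

lemma head?_filter {p : α → Bool} {l : List α} {x : α}
    (h : l.head? = some x) (hp : p x) : (l.filter p).head? = some x := by
  cases l with
  | nil => simp at h
  | cons a t => simp at h; subst h; simp [List.filter_cons, hp]

lemma getLast?_restrict {l : List α} {S : Finset α} {x : α}
    (h : l.getLast? = some x) (hx : x ∈ S) : (restrictList l S).getLast? = some x :=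
  getLast?_filter h (by simpa using hx)

lemma head?_restrict {l : List α} {S : Finset α} {x : α}
    (h : l.head? = some x) (hx : x ∈ S) : (restrictList l S).head? = some x :=
  head?_filter h (by simpa using hx)

lemma length_restrict_le (l : List α) (S : Finset α) :
    (restrictList l S).length ≤ l.length := List.length_filter_le _ _

lemma restrict_erase_of_not_mem {l : List α} (hl : l.Nodup) {f : α} {T : Finset α}
    (hf : f ∉ T) : restrictList (l.erase f) T = restrictList l T := by
  rw [hl.erase_eq_filter, restrictList, restrictList, List.filter_filter]
  apply List.filter_congr
  intro x _
  by_cases hxT : x ∈ T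
  · have : x ≠ f := fun h => hf (h ▸ hxT)
    simp [hxT, this]
  · simp [hxT]

lemma linOrd_length {A : Finset α} {l : List α} (h : IsLinOrd A l) : l.length = A.card := by
  have : l.toFinset = A := by ext a; simp [h.2 a]
  rw [← this, List.toFinset_card_of_nodup h.1]

lemma head_ne_last_of_nodup {l : List α} (hl : l.Nodup) (h2 : 2 ≤ l.length) {s : α}
    (hh : l.head? = some s) : l.getLast? ≠ some s := by
  cases l with
  | nil => simp at hh
  | cons a t =>
    simp only [List.head?_cons, Option.some_inj] at hh
    cases t with
    | nil => simp at h2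
    | cons b u =>
      rw [getLast?_cons_ne_nil (by simp)]
      intro hcon
      have : s ∈ b :: u := mem_of_getLast?_eq hcon
      exact (List.nodup_cons.mp hl).1 (hh ▸ this)

lemma restrict_univ {β : Type*} [DecidableEq β] [Fintype β] (l : List β) :
    restrictList l Finset.univ = l := by
  apply List.filter_eq_self.mpr; intro a _; simp

end ListLemmas

set_option linter.unusedSectionVars false
section Differ
variable {α : Type*} [DecidableEq α]

lemma restrictList_cons_of_mem {c : α} {S : Finset α} (u : List α) (h : c ∈ S) :
    restrictList (c :: u) S = c :: restrictList u S :=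
  List.filter_cons_of_pos (by simpa using h)

lemma restrictList_cons_of_not_mem {c : α} {S : Finset α} (u : List α) (h : c ∉ S) :
    restrictList (c :: u) S = restrictList u S :=
  List.filter_cons_of_neg (by simpa using h)

lemma restrictList_eq_nil {S : Finset α} {u : List α} (h : ∀ x ∈ u, x ∉ S) :
    restrictList u S = [] :=
  List.filter_eq_nil_iff.mpr (by simpa using h)

lemma restrict_pair_single {t : List α} (hn : t.Nodup) {a b : α} (hb : b ∈ t) (ha : a ∉ t) :
    restrictList t {a, b} = [b] := by
  induction t with
  | nil => simp at hb
  | cons c u ih =>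
    have hnc := List.nodup_cons.mp hn
    rcases List.mem_cons.mp hb with rfl | hbu
    · rw [restrictList_cons_of_mem u (by simp)]
      rw [restrictList_eq_nil]
      intro x hx
      have hxa : x ≠ a := fun h => ha (h ▸ List.mem_cons_of_mem _ hx)
      have hxb : x ≠ b := fun h => hnc.1 (h ▸ hx)
      simp [hxa, hxb]
    · have hca : c ≠ a := fun h => ha (h ▸ List.mem_cons_self)
      have hcb : c ≠ b := fun h => hnc.1 (h ▸ hbu)
      rw [restrictList_cons_of_not_mem u (by simp [hca, hcb])]
      exact ih hnc.2 hbu (fun h => ha (List.mem_cons_of_mem _ h))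

lemma exists_differ_pair : ∀ (l l' : List α), l.Nodup → l'.Nodup →
    (∀ a, a ∈ l ↔ a ∈ l') → l ≠ l' →
    ∃ x y, x ≠ y ∧ x ∈ l ∧ y ∈ l ∧
      restrictList l {x, y} = [x, y] ∧ restrictList l' {x, y} = [y, x] := by
  intro l
  induction l with
  | nil =>
    intro l' _ _ hmem hne
    exfalso
    apply hne
    cases l' with
    | nil => rfl
    | cons b t => exact absurd ((hmem b).mpr (List.mem_cons_self)) (by simp)
  | cons a t ih =>
    intro l' hn hn' hmem hne
    cases l' with
    | nil => exact absurd ((hmem a).mp (List.mem_cons_self)) (by simp)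
    | cons b t' =>
      have hna := List.nodup_cons.mp hn
      have hnb := List.nodup_cons.mp hn'
      by_cases hab : a = b
      · subst hab
        have htne : t ≠ t' := fun h => hne (by rw [h])
        have htmem : ∀ x, x ∈ t ↔ x ∈ t' := by
          intro x
          constructor
          · intro hx
            rcases List.mem_cons.mp ((hmem x).mp (List.mem_cons_of_mem _ hx)) with rfl | h
            · exact absurd hx hna.1
            · exact h
          · intro hx
            rcases List.mem_cons.mp ((hmem x).mpr (List.mem_cons_of_mem _ hx)) with rfl | h
            · exact absurd hx hnb.1
            · exact h
        obtain ⟨x, y, hxy, hxt, hyt, hr1, hr2⟩ := ih t' hna.2 hnb.2 htmem htne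
        refine ⟨x, y, hxy, List.mem_cons_of_mem _ hxt, List.mem_cons_of_mem _ hyt, ?_, ?_⟩
        · rw [restrictList_cons_of_not_mem t (by
            simp only [Finset.mem_insert, Finset.mem_singleton]
            push_neg
            exact ⟨fun h => hna.1 (h ▸ hxt), fun h => hna.1 (h ▸ hyt)⟩), hr1]
        · rw [restrictList_cons_of_not_mem t' (by
            simp only [Finset.mem_insert, Finset.mem_singleton]
            push_neg
            exact ⟨fun h => hnb.1 (h ▸ ((htmem x).mp hxt)), fun h => hnb.1 (h ▸ ((htmem y).mp hyt))⟩), hr2]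
      · refine ⟨a, b, hab, List.mem_cons_self, ?_, ?_, ?_⟩
        · exact (hmem b).mpr (List.mem_cons_self)
        · rw [restrictList_cons_of_mem t (by simp)]
          have hbt : b ∈ t := by
            rcases List.mem_cons.mp ((hmem b).mpr (List.mem_cons_self)) with h | h
            · exact absurd h.symm hab
            · exact h
          rw [restrict_pair_single hna.2 hbt hna.1]
        · rw [restrictList_cons_of_mem t' (by simp)]
          have hat' : a ∈ t' := by
            rcases List.mem_cons.mp ((hmem a).mp (List.mem_cons_self)) with h | h
            · exact absurd h hab
            · exact h
          have : ({a, b} : Finset α) = {b, a} := Finset.pair_comm a b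
          rw [this, restrict_pair_single hnb.2 hat' hnb.1]

end Differ

section DomainBasics
variable {α : Type*} [DecidableEq α] {A : Finset α} {D : Set (List α)}

lemma singleton_isCD {l : List α} (hl : IsLinOrd A l) :
    IsCondorcetDomain A {l} := by
  refine ⟨by simpa using hl, ?_⟩
  rintro ⟨a, b, c, hab, hac, hbc, v₁, hv₁, v₂, hv₂, v₃, hv₃, p₁, p₂, p₃⟩
  simp only [Set.mem_singleton_iff] at hv₁ hv₂
  subst hv₁; subst hv₂
  rw [p₁] at p₂
  exact hab (by injection p₂)

lemma maxCD_nonempty (hmax : IsMaxCondorcetDomain A D) : D.Nonempty := by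
  by_contra h
  rw [Set.not_nonempty_iff_eq_empty] at h
  have hl : IsLinOrd A A.toList := ⟨A.nodup_toList, fun a => by simp⟩
  have := hmax.2 {A.toList} (singleton_isCD hl) (by simp [h])
  simp [h] at this

lemma mem_ne_nil {l : List α} (hl : IsLinOrd A l) (hA : 1 ≤ A.card) : l ≠ [] := by
  intro h
  rw [h] at hl
  have := linOrd_length hl
  simp at this
  omega

lemma terminal_mem {a : α} (hlin : ∀ l ∈ D, IsLinOrd A l) (h : TerminalElt D a) : a ∈ A := by
  obtain ⟨l, hl, hla⟩ := h
  exact ((hlin l hl).2 a).mp (mem_of_getLast?_eq hla)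

/-- Three distinct elements each occurring at the bottom of the restriction to
`T = {a,b,c}` contradict Arrow single-peakedness. -/
lemma nbkill (hSP : ∀ T : Finset α, T ⊆ A → T.card = 3 → ∃ x : α, NeverBottom D T x)
    {a b c : α} {T : Finset α} (hT : T = {a, b, c})
    (ha : a ∈ A) (hb : b ∈ A) (hc : c ∈ A)
    (hab : a ≠ b) (hac : a ≠ c) (hbc : b ≠ c)
    (wa : ∃ l ∈ D, (restrictList l T).getLast? = some a)
    (wb : ∃ l ∈ D, (restrictList l T).getLast? = some b)
    (wc : ∃ l ∈ D, (restrictList l T).getLast? = some c) : False := by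
  have hTsub : T ⊆ A := by
    rw [hT]
    intro x hx
    simp only [Finset.mem_insert, Finset.mem_singleton] at hx
    rcases hx with rfl | rfl | rfl <;> assumption
  have hTcard : T.card = 3 := by
    rw [hT]
    rw [Finset.card_insert_of_notMem (by simp [hab, hac]),
      Finset.card_insert_of_notMem (by simp [hbc])]
    simp
  obtain ⟨x, hxT, hxnb⟩ := hSP T hTsub hTcard
  rw [hT] at hxT
  simp only [Finset.mem_insert, Finset.mem_singleton] at hxT
  rcases hxT with rfl | rfl | rfl
  · obtain ⟨l, hl, hend⟩ := wa; exact hxnb l hl hend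
  · obtain ⟨l, hl, hend⟩ := wb; exact hxnb l hl hend
  · obtain ⟨l, hl, hend⟩ := wc; exact hxnb l hl hend

lemma atMostTwoTerminals
    (hlin : ∀ l ∈ D, IsLinOrd A l)
    (hSP : ∀ T : Finset α, T ⊆ A → T.card = 3 → ∃ x : α, NeverBottom D T x)
    {a b c : α} (hab : a ≠ b) (hac : a ≠ c) (hbc : b ≠ c)
    (ha : TerminalElt D a) (hb : TerminalElt D b) (hc : TerminalElt D c) : False := by
  have key : ∀ x : α, TerminalElt D x → x ∈ ({a,b,c} : Finset α) →
      ∃ l ∈ D, (restrictList l ({a,b,c} : Finset α)).getLast? = some x := by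
    rintro x ⟨l, hl, hlx⟩ hx
    exact ⟨l, hl, getLast?_restrict hlx hx⟩
  exact nbkill hSP rfl (terminal_mem hlin ha) (terminal_mem hlin hb) (terminal_mem hlin hc)
    hab hac hbc (key a ha (by simp)) (key b hb (by simp)) (key c hc (by simp))

lemma unique_head
    (hlin : ∀ l ∈ D, IsLinOrd A l)
    (hSP : ∀ T : Finset α, T ⊆ A → T.card = 3 → ∃ x : α, NeverBottom D T x)
    {s : α} (hs : TerminalElt D s) {l l' : List α} (hl : l ∈ D) (hl' : l' ∈ D)
    (h1 : l.head? = some s) (h2 : l'.head? = some s) : l = l' := by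
  by_contra hne
  obtain ⟨t, rfl⟩ : ∃ t, l = s :: t := by
    cases l with
    | nil => simp at h1
    | cons a u => simp only [List.head?_cons, Option.some_inj] at h1; exact ⟨u, by rw [h1]⟩
  obtain ⟨t', rfl⟩ : ∃ t', l' = s :: t' := by
    cases l' with
    | nil => simp at h2
    | cons a u => simp only [List.head?_cons, Option.some_inj] at h2; exact ⟨u, by rw [h2]⟩
  have hnl := (hlin _ hl).1
  have hnl' := (hlin _ hl').1
  have hna := List.nodup_cons.mp hnl
  have hnb := List.nodup_cons.mp hnl'
  have htmem : ∀ x, x ∈ t ↔ x ∈ t' := by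
    intro x
    constructor
    · intro hx
      rcases List.mem_cons.mp (((hlin _ hl').2 x).mpr (((hlin _ hl).2 x).mp
        (List.mem_cons_of_mem _ hx))) with rfl | h
      · exact absurd hx hna.1
      · exact h
    · intro hx
      rcases List.mem_cons.mp (((hlin _ hl).2 x).mpr (((hlin _ hl').2 x).mp
        (List.mem_cons_of_mem _ hx))) with rfl | h
      · exact absurd hx hnb.1
      · exact h
  obtain ⟨x, y, hxy, hxt, hyt, hr1, hr2⟩ := exists_differ_pair t t' hna.2 hnb.2 htmem
    (fun h => hne (by rw [h]))
  have hxs : x ≠ s := fun h => hna.1 (h ▸ hxt)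
  have hys : y ≠ s := fun h => hna.1 (h ▸ hyt)
  set T : Finset α := {s, x, y} with hTdef
  have hrestr : restrictList (s :: t) T = [s, x, y] := by
    rw [restrictList_cons_of_mem t (by simp [hTdef])]
    have : restrictList t T = restrictList t {x, y} := by
      apply List.filter_congr
      intro z hz
      have hzs : z ≠ s := fun h => hna.1 (h ▸ hz)
      simp [hTdef, hzs]
    rw [this, hr1]
  have hrestr' : restrictList (s :: t') T = [s, y, x] := by
    rw [restrictList_cons_of_mem t' (by simp [hTdef])]
    have : restrictList t' T = restrictList t' {x, y} := by
      apply List.filter_congr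
      intro z hz
      have hzs : z ≠ s := fun h => hnb.1 (h ▸ hz)
      simp [hTdef, hzs]
    rw [this, hr2]
  have hsA : s ∈ A := terminal_mem hlin hs
  have hxA : x ∈ A := ((hlin _ hl).2 x).mp (List.mem_cons_of_mem _ hxt)
  have hyA : y ∈ A := ((hlin _ hl).2 y).mp (List.mem_cons_of_mem _ hyt)
  apply nbkill hSP (hTdef) hsA hxA hyA (Ne.symm hxs) (Ne.symm hys) hxy
  · obtain ⟨w, hw, hws⟩ := hs
    exact ⟨w, hw, getLast?_restrict hws (by simp [hTdef])⟩
  · exact ⟨s :: t', hl', by rw [hrestr']; rfl⟩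
  · exact ⟨s :: t, hl, by rw [hrestr]; rfl⟩

end DomainBasics

section Terminals
variable {α : Type*} [DecidableEq α] {A : Finset α} {D : Set (List α)}

lemma exists_two_terminals (hmax : IsMaxCondorcetDomain A D) (hA : 2 ≤ A.card) :
    ∃ a b : α, a ≠ b ∧ TerminalElt D a ∧ TerminalElt D b := by
  classical
  have hlin := hmax.1.1
  obtain ⟨l₀, hl₀⟩ := maxCD_nonempty hmax
  have hl₀ne : l₀ ≠ [] := mem_ne_nil (hlin _ hl₀) (by omega)
  obtain ⟨a, ha⟩ : ∃ a, l₀.getLast? = some a := ⟨_, List.getLast?_eq_getLast hl₀ne⟩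
  by_cases hall : ∀ l' ∈ D, l'.getLast? = some a
  · exfalso
    -- move a to the top
    set n : List α := a :: l₀.erase a with hndef
    have hal₀ : a ∈ l₀ := mem_of_getLast?_eq ha
    have hn₀ := (hlin _ hl₀).1
    have hnlin : IsLinOrd A n := by
      constructor
      · rw [hndef, List.nodup_cons]
        exact ⟨fun h => ((hn₀.mem_erase_iff).mp h).1 rfl, hn₀.erase a⟩
      · intro x
        rw [hndef]
        simp only [List.mem_cons, hn₀.mem_erase_iff]
        constructor
        · rintro (rfl | ⟨-, hx⟩)
          · exact ((hlin _ hl₀).2 _).mp hal₀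
          · exact ((hlin _ hl₀).2 x).mp hx
        · intro hx
          by_cases hxa : x = a
          · exact Or.inl hxa
          · exact Or.inr ⟨hxa, ((hlin _ hl₀).2 x).mpr hx⟩
    have hCD : IsCondorcetDomain A (D ∪ {n}) := by
      constructor
      · rintro l (hl | hl)
        · exact hlin _ hl
        · rw [Set.mem_singleton_iff] at hl; rw [hl]; exact hnlin
      rintro ⟨x, y, z, hxy, hxz, hyz, v₁, hv₁, v₂, hv₂, v₃, hv₃, p₁, p₂, p₃⟩
      set T : Finset α := {x, y, z} with hTdef
      by_cases haT : a ∈ T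
      · -- each order of D restricts with a last, n restricts with a first
        have hDlast : ∀ v ∈ D, (restrictList v T).getLast? = some a :=
          fun v hv => getLast?_restrict (hall v hv) haT
        have hnhead : (restrictList n T).head? = some a :=
          head?_restrict (by rw [hndef]; rfl) haT
        simp only [hTdef, Finset.mem_insert, Finset.mem_singleton] at haT
        rcases haT with rfl | rfl | rfl
        · -- a = x : pattern [z,x,y] has x in the middle
          rcases hv₃ with hv₃ | hv₃
          · have := hDlast _ hv₃; rw [p₃] at this
            exact hxy (by simpa using this.symm)
          · rw [Set.mem_singleton_iff] at hv₃; subst hv₃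
            rw [p₃] at hnhead
            exact hxz (by simpa using hnhead.symm)
        · -- a = y : pattern [x,y,z] has y in the middle
          rcases hv₁ with hv₁ | hv₁
          · have := hDlast _ hv₁; rw [p₁] at this
            exact hyz (by simpa using this.symm)
          · rw [Set.mem_singleton_iff] at hv₁; subst hv₁
            rw [p₁] at hnhead
            exact hxy (by simpa using hnhead)
        · -- a = z : pattern [y,z,x] has z in the middle
          rcases hv₂ with hv₂ | hv₂
          · have := hDlast _ hv₂; rw [p₂] at this
            exact hxz (by simpa using this)
          · rw [Set.mem_singleton_iff] at hv₂; subst hv₂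
            rw [p₂] at hnhead
            exact hyz (by simpa using hnhead)
      · -- a ∉ T : replace n by l₀
        have hrn : restrictList n T = restrictList l₀ T := by
          rw [hndef, restrictList_cons_of_not_mem _ haT, restrict_erase_of_not_mem hn₀ haT]
        have repl : ∀ v, v ∈ D ∪ {n} → ∃ w ∈ D, restrictList w T = restrictList v T := by
          rintro v (hv | hv)
          · exact ⟨v, hv, rfl⟩
          · rw [Set.mem_singleton_iff] at hv; subst hv
            exact ⟨l₀, hl₀, hrn.symm⟩
        obtain ⟨w₁, hw₁, hrw₁⟩ := repl _ hv₁
        obtain ⟨w₂, hw₂, hrw₂⟩ := repl _ hv₂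
        obtain ⟨w₃, hw₃, hrw₃⟩ := repl _ hv₃
        exact hmax.1.2 ⟨x, y, z, hxy, hxz, hyz, w₁, hw₁, w₂, hw₂, w₃, hw₃,
          hrw₁.trans p₁, hrw₂.trans p₂, hrw₃.trans p₃⟩
    have heq := hmax.2 _ hCD Set.subset_union_left
    have hnD : n ∈ D := by rw [← heq]; exact Or.inr rfl
    have := hall n hnD
    -- but n ends with an element of l₀.erase a, which is ≠ a
    have herane : l₀.erase a ≠ [] := by
      intro h
      have : l₀.length - 1 = 0 := by rw [← List.length_erase_of_mem hal₀, h]; rfl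
      have hlen : l₀.length = A.card := linOrd_length (hlin _ hl₀)
      omega
    rw [hndef, getLast?_cons_ne_nil herane] at this
    have := mem_of_getLast?_eq this
    exact (hn₀.mem_erase_iff.mp this).1 rfl
  · push_neg at hall
    obtain ⟨l', hl', hlne⟩ := hall
    have hl'ne : l' ≠ [] := mem_ne_nil (hlin _ hl') (by omega)
    obtain ⟨b, hb⟩ : ∃ b, l'.getLast? = some b := ⟨_, List.getLast?_eq_getLast hl'ne⟩
    exact ⟨a, b, fun h => hlne (by rw [hb, h]), ⟨l₀, hl₀, ha⟩, ⟨l', hl', hb⟩⟩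

end Terminals

section Erase
variable {α : Type*} [DecidableEq α] {A : Finset α} {D : Set (List α)}

lemma erase_lin {l : List α} {f : α} (hl : IsLinOrd A l) : 
    IsLinOrd (A.erase f) (l.erase f) := by
  refine ⟨hl.1.erase f, fun x => ?_⟩
  rw [hl.1.mem_erase_iff, Finset.mem_erase, hl.2]

lemma erase_maxASP (hmax : IsMaxCondorcetDomain A D)
    (hSP : ∀ T : Finset α, T ⊆ A → T.card = 3 → ∃ x : α, NeverBottom D T x)
    {f : α} (hf : TerminalElt D f) :
    IsMaxCondorcetDomain (A.erase f) ((fun l => l.erase f) '' D) ∧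
    (∀ T : Finset α, T ⊆ A.erase f → T.card = 3 →
      ∃ x : α, NeverBottom ((fun l => l.erase f) '' D) T x) := by
  classical
  have hlin := hmax.1.1
  have hfA : f ∈ A := terminal_mem hlin hf
  set Db : Set (List α) := (fun l => l.erase f) '' D with hDb
  have hDblin : ∀ v ∈ Db, IsLinOrd (A.erase f) v := by
    rintro v ⟨l, hl, rfl⟩
    exact erase_lin (hlin _ hl)
  have hDbCD : IsCondorcetDomain (A.erase f) Db := by
    refine ⟨hDblin, ?_⟩
    rintro ⟨x, y, z, hxy, hxz, hyz, v₁, hv₁, v₂, hv₂, v₃, hv₃, p₁, p₂, p₃⟩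
    obtain ⟨l₁, hl₁, rfl⟩ := hv₁
    obtain ⟨l₂, hl₂, rfl⟩ := hv₂
    obtain ⟨l₃, hl₃, rfl⟩ := hv₃
    have hfT : f ∉ ({x, y, z} : Finset α) := by
      intro hfT
      have hmx : x ∈ restrictList (l₁.erase f) {x,y,z} := by rw [p₁]; simp
      have hmy : y ∈ restrictList (l₁.erase f) {x,y,z} := by rw [p₁]; simp
      have hmz : z ∈ restrictList (l₁.erase f) {x,y,z} := by rw [p₁]; simp
      have hmem : x ∈ l₁.erase f ∧ y ∈ l₁.erase f ∧ z ∈ l₁.erase f :=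
        ⟨(mem_restrictList.mp hmx).1, (mem_restrictList.mp hmy).1, (mem_restrictList.mp hmz).1⟩
      have hn := (hlin _ hl₁).1
      simp only [Finset.mem_insert, Finset.mem_singleton] at hfT
      rcases hfT with rfl | rfl | rfl
      · exact (hn.mem_erase_iff.mp hmem.1).1 rfl
      · exact (hn.mem_erase_iff.mp hmem.2.1).1 rfl
      · exact (hn.mem_erase_iff.mp hmem.2.2).1 rfl
    apply hmax.1.2
    exact ⟨x, y, z, hxy, hxz, hyz, l₁, hl₁, l₂, hl₂, l₃, hl₃,
      (restrict_erase_of_not_mem (hlin _ hl₁).1 hfT).symm.trans p₁,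
      (restrict_erase_of_not_mem (hlin _ hl₂).1 hfT).symm.trans p₂,
      (restrict_erase_of_not_mem (hlin _ hl₃).1 hfT).symm.trans p₃⟩
  have hDbSP : ∀ T : Finset α, T ⊆ A.erase f → T.card = 3 →
      ∃ x : α, NeverBottom Db T x := by
    intro T hT hT3
    have hfT : f ∉ T := fun h => (Finset.mem_erase.mp (hT h)).1 rfl
    obtain ⟨x, hxT, hx⟩ := hSP T (hT.trans (Finset.erase_subset _ _)) hT3
    refine ⟨x, hxT, ?_⟩
    rintro v ⟨l, hl, rfl⟩
    rw [restrict_erase_of_not_mem (hlin _ hl).1 hfT]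
    exact hx l hl
  refine ⟨⟨hDbCD, ?_⟩, hDbSP⟩
  intro D'' hD'' hsub
  apply Set.Subset.antisymm _ hsub
  intro w hw
  have hwlin : IsLinOrd (A.erase f) w := hD''.1 _ hw
  have hfw : f ∉ w := fun h => (Finset.mem_erase.mp ((hwlin.2 f).mp h)).1 rfl
  set n : List α := w ++ [f] with hndef
  have hnlast : n.getLast? = some f := List.getLast?_concat
  have hnlin : IsLinOrd A n := by
    constructor
    · rw [hndef, List.nodup_append]
      exact ⟨hwlin.1, List.nodup_singleton f, by
        intro a ha b hb
        simp only [List.mem_singleton] at hb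
        exact fun h => hfw (hb ▸ h ▸ ha)⟩
    · intro x
      rw [hndef]
      simp only [List.mem_append, List.mem_singleton, hwlin.2, Finset.mem_erase]
      constructor
      · rintro (⟨-, hx⟩ | rfl) <;> [exact hx; exact hfA]
      · intro hx
        by_cases hxf : x = f
        · exact Or.inr hxf
        · exact Or.inl ⟨hxf, hx⟩
  have hlinU : ∀ v ∈ D ∪ {n}, IsLinOrd A v := by
    rintro v (hv | hv)
    · exact hlin _ hv
    · rw [Set.mem_singleton_iff] at hv; rw [hv]; exact hnlin
  have hCD : IsCondorcetDomain A (D ∪ {n}) := by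
    refine ⟨hlinU, ?_⟩
    rintro ⟨x, y, z, hxy, hxz, hyz, v₁, hv₁, v₂, hv₂, v₃, hv₃, p₁, p₂, p₃⟩
    set T : Finset α := {x, y, z} with hTdef
    have hmemA : x ∈ A ∧ y ∈ A ∧ z ∈ A := by
      refine ⟨((hlinU _ hv₁).2 x).mp ?_, ((hlinU _ hv₁).2 y).mp ?_, ((hlinU _ hv₁).2 z).mp ?_⟩
      · exact (mem_restrictList.mp (by rw [p₁]; simp : x ∈ restrictList v₁ T)).1
      · exact (mem_restrictList.mp (by rw [p₁]; simp : y ∈ restrictList v₁ T)).1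
      · exact (mem_restrictList.mp (by rw [p₁]; simp : z ∈ restrictList v₁ T)).1
    by_cases hfT : f ∈ T
    · have memD : ∀ v L, v ∈ D ∪ {n} → restrictList v T = L → L.getLast? ≠ some f → v ∈ D := by
        rintro v L (hv | hv) hp hL
        · exact hv
        · rw [Set.mem_singleton_iff] at hv; subst hv
          exact absurd (hp ▸ getLast?_restrict hnlast hfT) hL
      obtain ⟨lf, hlf, hlfe⟩ := hf
      have wcf : ∃ l ∈ D, (restrictList l T).getLast? = some f :=
        ⟨lf, hlf, getLast?_restrict hlfe hfT⟩
      simp only [hTdef, Finset.mem_insert, Finset.mem_singleton] at hfT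
      rcases hfT with rfl | rfl | rfl
      · -- f = x ; T = {f, y, z}
        refine nbkill hSP (show T = {y, z, f} by ext u; simp [hTdef]; tauto)
          hmemA.2.1 hmemA.2.2 hmemA.1 hyz (Ne.symm hxy) (Ne.symm hxz) ?_ ?_ wcf
        · exact ⟨v₃, memD _ _ hv₃ p₃ (by simp [Ne.symm hxy]), by rw [p₃]; rfl⟩
        · exact ⟨v₁, memD _ _ hv₁ p₁ (by simp [Ne.symm hxz]), by rw [p₁]; rfl⟩
      · -- f = y ; T = {x, f, z}
        refine nbkill hSP (show T = {z, x, f} by ext u; simp [hTdef]; tauto)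
          hmemA.2.2 hmemA.1 hmemA.2.1 (Ne.symm hxz) (Ne.symm hyz) hxy ?_ ?_ wcf
        · exact ⟨v₁, memD _ _ hv₁ p₁ (by simp [Ne.symm hyz]), by rw [p₁]; rfl⟩
        · exact ⟨v₂, memD _ _ hv₂ p₂ (by simp [hxy]), by rw [p₂]; rfl⟩
      · -- f = z ; T = {x, y, f}
        refine nbkill hSP hTdef
          hmemA.1 hmemA.2.1 hmemA.2.2 hxy hxz hyz ?_ ?_ wcf
        · exact ⟨v₂, memD _ _ hv₂ p₂ (by simp [hxz]), by rw [p₂]; rfl⟩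
        · exact ⟨v₃, memD _ _ hv₃ p₃ (by simp [hyz]), by rw [p₃]; rfl⟩
    · have hrn : restrictList n T = restrictList w T := by
        rw [hndef, restrictList, restrictList, List.filter_append]
        have : List.filter (fun a => decide (a ∈ T)) [f] = [] := by simp [hfT]
        rw [this, List.append_nil]
      have repl : ∀ v, v ∈ D ∪ {n} → ∃ u ∈ D'', restrictList u T = restrictList v T := by
        rintro v (hv | hv)
        · exact ⟨v.erase f, hsub ⟨v, hv, rfl⟩,
            restrict_erase_of_not_mem (hlin _ hv).1 hfT⟩
        · rw [Set.mem_singleton_iff] at hv; subst hv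
          exact ⟨w, hw, hrn.symm⟩
      obtain ⟨u₁, hu₁, hru₁⟩ := repl _ hv₁
      obtain ⟨u₂, hu₂, hru₂⟩ := repl _ hv₂
      obtain ⟨u₃, hu₃, hru₃⟩ := repl _ hv₃
      exact hD''.2 ⟨x, y, z, hxy, hxz, hyz, u₁, hu₁, u₂, hu₂, u₃, hu₃,
        hru₁.trans p₁, hru₂.trans p₂, hru₃.trans p₃⟩
  have heq := hmax.2 _ hCD Set.subset_union_left
  have hnD : n ∈ D := by rw [← heq]; exact Or.inr rfl
  refine ⟨n, hnD, ?_⟩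
  show n.erase f = w
  rw [hndef, List.erase_append_right _ hfw, List.erase_cons_head, List.append_nil]

end Erase

section Struct
variable {α : Type*} [DecidableEq α]

lemma exists_head_aux : ∀ n : ℕ, ∀ (A : Finset α) (D : Set (List α)) (s : α),
    A.card = n → 2 ≤ n → IsMaxCondorcetDomain A D →
    (∀ T : Finset α, T ⊆ A → T.card = 3 → ∃ x : α, NeverBottom D T x) →
    TerminalElt D s → ∃ l ∈ D, l.head? = some s := by
  intro n
  induction n using Nat.strong_induction_on with
  | _ n ih =>
  intro A D s hcard hn hmax hSP hs
  have hlin := hmax.1.1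
  by_cases hn2 : n = 2
  · subst hn2
    obtain ⟨ls, hls, hlse⟩ := hs
    have hlen : ls.length = 2 := by rw [linOrd_length (hlin _ hls), hcard]
    obtain ⟨x, y, rfl⟩ := List.length_eq_two.mp hlen
    have hys : y = s := by simpa [getLast?_cons_ne_nil] using hlse
    rw [hys] at hls
    have hnd := (hlin _ hls).1
    have hxs : x ≠ s := by simpa using hnd
    have hn₀lin : IsLinOrd A [s, x] := by
      refine ⟨by simp [Ne.symm hxs], fun z => ?_⟩
      rw [← (hlin _ hls).2 z]
      simp; tauto
    have hCD : IsCondorcetDomain A (D ∪ {[s, x]}) := by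
      constructor
      · rintro l (hl | hl)
        · exact hlin _ hl
        · rw [Set.mem_singleton_iff] at hl; rw [hl]; exact hn₀lin
      rintro ⟨a, b, c, hab, hac, hbc, v₁, hv₁, v₂, hv₂, v₃, hv₃, p₁, p₂, p₃⟩
      have hv₁lin : IsLinOrd A v₁ := by
        rcases hv₁ with h | h
        · exact hlin _ h
        · rw [Set.mem_singleton_iff] at h; rw [h]; exact hn₀lin
      have : (restrictList v₁ {a,b,c}).length = 3 := by rw [p₁]; rfl
      have h2 : v₁.length = 2 := by rw [linOrd_length hv₁lin, hcard]
      have := length_restrict_le v₁ ({a,b,c} : Finset α)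
      omega
    have heq := hmax.2 _ hCD Set.subset_union_left
    have : [s, x] ∈ D := by rw [← heq]; exact Or.inr rfl
    exact ⟨[s, x], this, rfl⟩
  · have hn3 : 3 ≤ n := by omega
    -- find a second terminal element f ≠ s
    obtain ⟨a, b, hab, ha, hb⟩ := exists_two_terminals hmax (by omega)
    obtain ⟨f, hfs, hf⟩ : ∃ f, f ≠ s ∧ TerminalElt D f := by
      by_cases hsa : s = a
      · exact ⟨b, fun h => hab (h ▸ hsa).symm, hb⟩
      · by_cases hsb : s = b
        · exact ⟨a, fun h => hsa (h.symm), ha⟩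
        · exact absurd (atMostTwoTerminals hlin hSP hsa hsb hab hs ha hb) (by simp)
    obtain ⟨hmaxDb, hSPDb⟩ := erase_maxASP hmax hSP hf
    have hfA : f ∈ A := terminal_mem hlin hf
    have hcardDb : (A.erase f).card = n - 1 := by
      rw [Finset.card_erase_of_mem hfA, hcard]
    have hsDb : TerminalElt ((fun l => l.erase f) '' D) s := by
      obtain ⟨ls, hls, hlse⟩ := hs
      refine ⟨ls.erase f, ⟨ls, hls, rfl⟩, ?_⟩
      show (ls.erase f).getLast? = some s
      rw [(hlin _ hls).1.erase_eq_filter]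
      exact getLast?_filter hlse (by simp [Ne.symm hfs])
    obtain ⟨lb, hlb, hlbh⟩ := ih (n-1) (by omega) (A.erase f) _ s hcardDb (by omega)
      hmaxDb hSPDb hsDb
    obtain ⟨l₀, hl₀, rfl⟩ := hlb
    replace hlbh : (l₀.erase f).head? = some s := hlbh
    refine ⟨l₀, hl₀, ?_⟩
    have hl₀len : l₀.length = n := by rw [linOrd_length (hlin _ hl₀), hcard]
    obtain ⟨h, t, rfl⟩ : ∃ h t, l₀ = h :: t := by
      cases l₀ with
      | nil => simp at hl₀len; omega
      | cons h t => exact ⟨h, t, rfl⟩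
    have hnd := (hlin _ hl₀).1
    have htne : t ≠ [] := by
      intro hte
      rw [hte] at hl₀len
      simp at hl₀len; omega
    by_cases hhf : h = f
    · exfalso
      rw [hhf, List.erase_cons_head] at hlbh
      obtain ⟨z, hz⟩ : ∃ z, t.getLast? = some z := ⟨_, List.getLast?_eq_getLast htne⟩
      have hzterm : TerminalElt D z :=
        ⟨h :: t, hl₀, by rw [getLast?_cons_ne_nil htne]; exact hz⟩
      have htlen : 2 ≤ t.length := by
        have : (h :: t).length = n := hl₀len
        simp at this; omega
      by_cases hzs : z = s
      · exact head_ne_last_of_nodup (List.nodup_cons.mp hnd).2 htlen hlbh (hzs ▸ hz)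
      · by_cases hzf : z = f
        · exact (List.nodup_cons.mp hnd).1
            (by rw [hhf, ← hzf]; exact mem_of_getLast?_eq hz : h ∈ t)
        · exact atMostTwoTerminals hlin hSP hzs hzf (Ne.symm hfs) hzterm hs hf
    · rw [List.erase_cons_tail (by simp [hhf])] at hlbh
      simp only [List.head?_cons, Option.some_inj] at hlbh ⊢
      exact hlbh

lemma struct {A : Finset α} {D : Set (List α)} (hmax : IsMaxCondorcetDomain A D)
    (hSP : ∀ T : Finset α, T ⊆ A → T.card = 3 → ∃ x : α, NeverBottom D T x)
    (hA : 3 ≤ A.card) :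
    ∃ P Q, IsExtremal D P ∧ IsExtremal D Q ∧ P ≠ Q ∧
      (∀ l, IsExtremal D l → l = P ∨ l = Q) := by
  have hlin := hmax.1.1
  obtain ⟨a, b, hab, ha, hb⟩ := exists_two_terminals hmax (by omega)
  have allterm : ∀ c, TerminalElt D c → c = a ∨ c = b := by
    intro c hc
    by_contra hcon
    push_neg at hcon
    exact atMostTwoTerminals hlin hSP hcon.1 hcon.2 hab hc ha hb
  obtain ⟨P, hPD, hPh⟩ := exists_head_aux A.card A D a rfl (by omega) hmax hSP ha
  obtain ⟨Q, hQD, hQh⟩ := exists_head_aux A.card A D b rfl (by omega) hmax hSP hb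
  have hlast : ∀ l ∈ D, ∀ s, l.head? = some s → ∀ t, (∀ c, TerminalElt D c → c = s ∨ c = t)
      → l.getLast? = some t := by
    intro l hl s hhead t hst
    have hlen : 2 ≤ l.length := by rw [linOrd_length (hlin _ hl)]; omega
    have hne : l ≠ [] := by intro h; rw [h] at hlen; simp at hlen
    obtain ⟨z, hz⟩ : ∃ z, l.getLast? = some z := ⟨_, List.getLast?_eq_getLast hne⟩
    have hzterm : TerminalElt D z := ⟨l, hl, hz⟩
    rcases hst z hzterm with rfl | rfl
    · exact absurd hz (head_ne_last_of_nodup (hlin _ hl).1 hlen hhead)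
    · exact hz
  have hPlast : P.getLast? = some b := hlast P hPD a hPh b allterm
  have hQlast : Q.getLast? = some a := hlast Q hQD b hQh a (fun c hc => (allterm c hc).symm)
  have hPextr : IsExtremal D P := ⟨hPD, a, b, hab, hPh, hPlast, ha, hb, allterm⟩
  have hQextr : IsExtremal D Q := ⟨hQD, b, a, Ne.symm hab, hQh, hQlast, hb, ha,
    fun c hc => (allterm c hc).symm⟩
  have hPQ : P ≠ Q := by
    intro h
    rw [h, hQh] at hPh
    exact hab (by injection hPh with hh; exact hh.symm)
  refine ⟨P, Q, hPextr, hQextr, hPQ, ?_⟩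
  rintro l ⟨hlD, s', t', hst', hh', hl', hs', ht', hall'⟩
  rcases allterm s' hs' with rfl | rfl
  · exact Or.inl (unique_head hlin hSP ha hlD hPD hh' hPh)
  · exact Or.inr (unique_head hlin hSP hb hlD hQD hh' hQh)

end Struct

section PermNat
variable {α : Type*} [DecidableEq α]

def permD (φ : Equiv.Perm α) (D : Set (List α)) : Set (List α) :=
  (fun l : List α => l.map φ) '' D

lemma myfilter_map (g : α → α) (p : α → Bool) :
    ∀ l : List α, (l.map g).filter p = (l.filter (fun a => p (g a))).map g := by
  intro l
  induction l with
  | nil => rfl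
  | cons a t ih =>
    simp only [List.map_cons, List.filter_cons]
    by_cases h : p (g a) <;> simp [h, ih]

lemma restrict_map (φ : Equiv.Perm α) (l : List α) (T : Finset α) :
    restrictList (l.map φ) T = (restrictList l (T.image φ.symm)).map φ := by
  rw [restrictList, restrictList, myfilter_map]
  congr 1
  apply List.filter_congr
  intro x _
  simp only [decide_eq_decide, Finset.mem_image]
  constructor
  · intro h; exact ⟨φ x, h, by simp⟩
  · rintro ⟨y, hy, hxy⟩
    have : y = φ x := by
      have := congrArg φ hxy
      simpa using this
    rwa [this] at hy

lemma map_map_symm (φ : Equiv.Perm α) (l : List α) : (l.map φ).map φ.symm = l := by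
  rw [List.map_map]
  simp

lemma map_symm_map (φ : Equiv.Perm α) (l : List α) : (l.map φ.symm).map φ = l := by
  rw [List.map_map]
  simp

lemma permD_permD (φ ψ : Equiv.Perm α) (D : Set (List α)) :
    permD φ (permD ψ D) = permD (φ * ψ) D := by
  rw [permD, permD, permD, Set.image_image]
  apply Set.image_congr
  intro l _
  rw [List.map_map]
  congr 1

lemma permD_one (D : Set (List α)) : permD 1 D = D := by
  rw [permD]
  convert Set.image_id D
  ext l
  simp

lemma permD_symm_permD (φ : Equiv.Perm α) (D : Set (List α)) :
    permD φ.symm (permD φ D) = D := by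
  rw [permD_permD]
  convert permD_one D
  ext x
  simp

lemma permD_permD_symm (φ : Equiv.Perm α) (D : Set (List α)) :
    permD φ (permD φ.symm D) = D := by
  rw [permD_permD]
  convert permD_one D
  ext x
  simp

variable [Fintype α]

lemma lin_map (φ : Equiv.Perm α) {l : List α} (h : IsLinOrd (Finset.univ : Finset α) l) :
    IsLinOrd (Finset.univ : Finset α) (l.map φ) := by
  refine ⟨h.1.map φ.injective, fun a => ?_⟩
  simp only [List.mem_map, Finset.mem_univ, iff_true]
  exact ⟨φ.symm a, (h.2 _).mpr (Finset.mem_univ _), by simp⟩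

lemma CT_map (φ : Equiv.Perm α) {D : Set (List α)} (h : CondorcetTriple (permD φ D)) :
    CondorcetTriple D := by
  obtain ⟨a, b, c, hab, hac, hbc, v₁, hv₁, v₂, hv₂, v₃, hv₃, p₁, p₂, p₃⟩ := h
  obtain ⟨l₁, hl₁, rfl⟩ := hv₁
  obtain ⟨l₂, hl₂, rfl⟩ := hv₂
  obtain ⟨l₃, hl₃, rfl⟩ := hv₃
  have himg : ({a, b, c} : Finset α).image φ.symm = {φ.symm a, φ.symm b, φ.symm c} := by
    rw [Finset.image_insert, Finset.image_insert, Finset.image_singleton]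
  refine ⟨φ.symm a, φ.symm b, φ.symm c, by simp [hab], by simp [hac], by simp [hbc],
    l₁, hl₁, l₂, hl₂, l₃, hl₃, ?_, ?_, ?_⟩
  · have := p₁
    rw [restrict_map, himg] at this
    have := congrArg (fun l : List α => l.map φ.symm) this
    simpa [map_map_symm] using this
  · have := p₂
    rw [restrict_map, himg] at this
    have := congrArg (fun l : List α => l.map φ.symm) this
    simpa [map_map_symm] using this
  · have := p₃
    rw [restrict_map, himg] at this
    have := congrArg (fun l : List α => l.map φ.symm) this
    simpa [map_map_symm] using this

lemma CD_map (φ : Equiv.Perm α) {D : Set (List α)}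
    (h : IsCondorcetDomain (Finset.univ : Finset α) D) :
    IsCondorcetDomain (Finset.univ : Finset α) (permD φ D) := by
  constructor
  · rintro l ⟨l', hl', rfl⟩
    exact lin_map φ (h.1 _ hl')
  · intro hc
    exact h.2 (CT_map φ hc)

lemma maxCD_map (φ : Equiv.Perm α) {D : Set (List α)}
    (h : IsMaxCondorcetDomain (Finset.univ : Finset α) D) :
    IsMaxCondorcetDomain (Finset.univ : Finset α) (permD φ D) := by
  refine ⟨CD_map φ h.1, ?_⟩
  intro D' hD' hsub
  have hsub2 : D ⊆ permD φ.symm D' := by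
    intro l hl
    have : l.map φ ∈ D' := hsub ⟨l, hl, rfl⟩
    exact ⟨l.map φ, this, map_map_symm φ l⟩
  have := h.2 (permD φ.symm D') (CD_map φ.symm hD') hsub2
  rw [← this, permD_permD_symm]

lemma nb_map (φ : Equiv.Perm α) {D : Set (List α)} {T : Finset α} {x : α}
    (h : NeverBottom D T x) : NeverBottom (permD φ D) (T.image φ) (φ x) := by
  refine ⟨Finset.mem_image_of_mem φ h.1, ?_⟩
  rintro v ⟨l, hl, rfl⟩
  rw [restrict_map]
  have : (T.image φ).image φ.symm = T := by
    ext y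
    simp only [Finset.mem_image]
    constructor
    · rintro ⟨z, ⟨w, hw, rfl⟩, rfl⟩
      simpa using hw
    · intro hy
      exact ⟨φ y, ⟨y, hy, rfl⟩, by simp⟩
  rw [this, List.getLast?_map]
  intro hcon
  cases hge : (restrictList l T).getLast? with
  | none => rw [hge] at hcon; simp at hcon
  | some y =>
    rw [hge] at hcon
    simp only [Option.map_some, Option.some_inj] at hcon
    have : y = x := φ.injective hcon
    exact h.2 l hl (by rw [hge, this])

lemma masp_map (φ : Equiv.Perm α) {D : Set (List α)}
    (h : IsMaxArrowSP (Finset.univ : Finset α) D) :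
    IsMaxArrowSP (Finset.univ : Finset α) (permD φ D) := by
  refine ⟨maxCD_map φ h.1, CD_map φ h.2.1, ?_⟩
  intro T _ hT3
  obtain ⟨x, hx⟩ := h.2.2 (T.image φ.symm) (Finset.subset_univ _)
    (by rw [Finset.card_image_of_injective _ φ.symm.injective, hT3])
  have himg : (T.image φ.symm).image φ = T := by
    ext y
    simp only [Finset.mem_image]
    constructor
    · rintro ⟨z, ⟨w, hw, rfl⟩, rfl⟩
      simpa using hw
    · intro hy
      exact ⟨φ.symm y, ⟨y, hy, rfl⟩, by simp⟩
  exact ⟨φ x, himg ▸ nb_map φ hx⟩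

lemma terminal_map (φ : Equiv.Perm α) {D : Set (List α)} {a : α}
    (h : TerminalElt D a) : TerminalElt (permD φ D) (φ a) := by
  obtain ⟨l, hl, hla⟩ := h
  exact ⟨l.map φ, ⟨l, hl, rfl⟩, by rw [List.getLast?_map, hla]; rfl⟩

lemma terminal_map_rev (φ : Equiv.Perm α) {D : Set (List α)} {a : α}
    (h : TerminalElt (permD φ D) a) : TerminalElt D (φ.symm a) := by
  obtain ⟨v, ⟨l, hl, rfl⟩, hla⟩ := h
  refine ⟨l, hl, ?_⟩
  rw [List.getLast?_map] at hla
  obtain ⟨y, hy, rfl⟩ := Option.map_eq_some_iff.mp hla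
  simpa using hy

lemma extremal_map (φ : Equiv.Perm α) {D : Set (List α)} {l : List α}
    (h : IsExtremal D l) : IsExtremal (permD φ D) (l.map φ) := by
  obtain ⟨hlD, s, t, hst, hh, hl, hs, ht, hall⟩ := h
  refine ⟨⟨l, hlD, rfl⟩, φ s, φ t, by simp [hst], ?_, ?_, terminal_map φ hs,
    terminal_map φ ht, ?_⟩
  · rw [List.head?_map, hh]; rfl
  · rw [List.getLast?_map, hl]; rfl
  · intro a ha
    rcases hall (φ.symm a) (terminal_map_rev φ ha) with h' | h'
    · left; rw [← h']; simp
    · right; rw [← h']; simp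

lemma selfpaired_map (φ : Equiv.Perm α) {D : Set (List α)}
    (h : SelfPaired D) : SelfPaired (permD φ D) := by
  obtain ⟨P, Q, θ, hPQ, hP, hQ, huniq, hmapθ, himg⟩ := h
  refine ⟨P.map φ, Q.map φ, (φ.symm.trans θ).trans φ, ?_, extremal_map φ hP,
    extremal_map φ hQ, ?_, ?_, ?_⟩
  · intro hcon
    apply hPQ
    have := congrArg (fun l : List α => l.map φ.symm) hcon
    simpa [map_map_symm] using this
  · intro l hl
    have hrev : IsExtremal D (l.map φ.symm) := by
      have := extremal_map φ.symm hl
      rwa [permD_symm_permD] at this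
    rcases huniq _ hrev with h' | h'
    · left
      have := congrArg (fun l : List α => l.map φ) h'
      simpa [map_symm_map] using this
    · right
      have := congrArg (fun l : List α => l.map φ) h'
      simpa [map_symm_map] using this
  · rw [List.map_map, ← hmapθ, List.map_map]
    apply List.map_congr_left
    intro a _
    simp
  · show permD ((φ.symm.trans θ).trans φ) (permD φ D) = permD φ D
    rw [permD_permD]
    have hcomp : ((φ.symm.trans θ).trans φ) * φ = φ * θ := by
      ext x
      simp [Equiv.Perm.mul_apply]
    rw [hcomp, ← permD_permD]
    have hDθ : permD θ D = D := himg
    rw [hDθ]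

end PermNat

section FinM
variable {m : ℕ}

lemma full_length {u : List (Fin m)} (hn : u.Nodup) (hm : ∀ a, a ∈ u) : u.length = m := by
  have h0 : u.toFinset = Finset.univ := by ext a; simp [hm a]
  have h1 : u.toFinset.card = u.length := List.toFinset_card_of_nodup hn
  rw [h0] at h1
  simpa using h1.symm

lemma exists_perm_map {u v : List (Fin m)} (hun : u.Nodup) (hum : ∀ a, a ∈ u)
    (hvn : v.Nodup) (hvm : ∀ a, a ∈ v) : ∃ φ : Equiv.Perm (Fin m), u.map φ = v := by
  have hlu := full_length hun hum
  have hlv := full_length hvn hvm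
  have hl : u.length = v.length := hlu.trans hlv.symm
  let Eu := List.Nodup.getEquivOfForallMemList u hun hum
  let Ev := List.Nodup.getEquivOfForallMemList v hvn hvm
  refine ⟨Eu.symm.trans ((finCongr hl).trans Ev), ?_⟩
  apply List.ext_get (by simpa using hl)
  intro i h1 h2
  rw [List.get_eq_getElem, List.getElem_map]
  have hiu : i < u.length := by simpa using h1
  show Ev (finCongr hl (Eu.symm (u.get ⟨i, hiu⟩))) = v.get ⟨i, h2⟩
  have e1 : Eu.symm (u.get ⟨i, hiu⟩) = ⟨i, hiu⟩ := Eu.symm_apply_apply ⟨i, hiu⟩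
  rw [e1]
  show v.get (finCongr hl ⟨i, hiu⟩) = v.get ⟨i, h2⟩
  congr 1

lemma map_perm_one (l : List (Fin m)) : l.map ⇑(1 : Equiv.Perm (Fin m)) = l := by
  simp

lemma unique_perm_map {u : List (Fin m)} (hum : ∀ a, a ∈ u) {φ ψ : Equiv.Perm (Fin m)}
    (h : u.map φ = u.map ψ) : φ = ψ :=
  Equiv.ext fun a => List.map_inj_left.mp h a (hum a)

end FinM

section Orbits
variable {m : ℕ}

def Orbit (D : Set (List (Fin m))) : Set (Set (List (Fin m))) :=
  {D' | ∃ φ : Equiv.Perm (Fin m), (fun l : List (Fin m) => l.map φ) '' D = D'}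

lemma permD_eq_image (φ : Equiv.Perm (Fin m)) (D : Set (List (Fin m))) :
    (fun l : List (Fin m) => l.map φ) '' D = permD φ D := rfl

lemma mem_orbit_self (D : Set (List (Fin m))) : D ∈ Orbit D :=
  ⟨1, permD_one D⟩

lemma mem_orbit_permD (φ : Equiv.Perm (Fin m)) (D : Set (List (Fin m))) :
    permD φ D ∈ Orbit D := ⟨φ, rfl⟩

lemma orbit_permD (φ : Equiv.Perm (Fin m)) (D : Set (List (Fin m))) :
    Orbit (permD φ D) = Orbit D := by
  ext E
  constructor
  · rintro ⟨ψ, rfl⟩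
    exact ⟨ψ * φ, by rw [permD_eq_image, permD_eq_image, ← permD_permD]⟩
  · rintro ⟨χ, rfl⟩
    refine ⟨χ * φ⁻¹, ?_⟩
    rw [permD_eq_image, permD_eq_image, permD_permD, inv_mul_cancel_right]

lemma orbit_eq_of_mem {D D' : Set (List (Fin m))} (h : D' ∈ Orbit D) :
    Orbit D' = Orbit D := by
  obtain ⟨φ, rfl⟩ := h
  exact orbit_permD φ D

def Xset (m : ℕ) : Set (Set (List (Fin m))) :=
  {D | IsMaxArrowSP Finset.univ D ∧ IsExtremal D (List.finRange m)}

def Classes (m : ℕ) : Set (Set (Set (List (Fin m)))) :=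
  {C | ∃ D : Set (List (Fin m)), IsMaxArrowSP Finset.univ D ∧ C = Orbit D}

def SPClasses (m : ℕ) : Set (Set (Set (List (Fin m)))) :=
  {C | ∃ D : Set (List (Fin m)), IsMaxArrowSP Finset.univ D ∧ SelfPaired D ∧ C = Orbit D}

lemma card_univ_fin : (Finset.univ : Finset (Fin m)).card = m := by simp

lemma struct' (hm : 3 ≤ m) {D : Set (List (Fin m))} (hD : IsMaxArrowSP Finset.univ D) :
    ∃ P Q, IsExtremal D P ∧ IsExtremal D Q ∧ P ≠ Q ∧
      (∀ l, IsExtremal D l → l = P ∨ l = Q) :=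
  struct hD.1 hD.2.2 (by rw [card_univ_fin]; omega)

lemma lin_of_mem {D : Set (List (Fin m))} (hD : IsMaxArrowSP Finset.univ D) {l : List (Fin m)}
    (hl : l ∈ D) : l.Nodup ∧ ∀ a, a ∈ l := by
  have := hD.1.1.1 l hl
  exact ⟨this.1, fun a => (this.2 a).mpr (Finset.mem_univ a)⟩

/-- The main fiber description: each `D ∈ X` has a companion `D₂` such that the fiber of the
orbit map over `Orbit D` inside `X` is `{D, D₂}`, with `D₂ = D` iff `D` is self-paired. -/
lemma key_fiber (hm : 3 ≤ m) {D : Set (List (Fin m))} (hD : D ∈ Xset m) :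
    ∃ D₂ ∈ Xset m, Orbit D₂ = Orbit D ∧
      (∀ D' ∈ Xset m, Orbit D' = Orbit D → D' = D ∨ D' = D₂) ∧ (D₂ = D ↔ SelfPaired D) := by
  obtain ⟨hmasp, hext⟩ := hD
  obtain ⟨P, Q, hP, hQ, hPQ, huniq⟩ := struct' hm hmasp
  -- main argument, with `e = P`, `r = Q`
  have main : ∀ P Q : List (Fin m), IsExtremal D P → IsExtremal D Q → P ≠ Q →
      (∀ l, IsExtremal D l → l = P ∨ l = Q) → List.finRange m = P →
      ∃ D₂ ∈ Xset m, Orbit D₂ = Orbit D ∧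
      (∀ D' ∈ Xset m, Orbit D' = Orbit D → D' = D ∨ D' = D₂) ∧ (D₂ = D ↔ SelfPaired D) := by
    clear hP hQ hPQ huniq P Q
    intro P Q hP hQ hPQ huniq heP
    set e : List (Fin m) := List.finRange m with hedef
    have hrlin := lin_of_mem hmasp hQ.1
    have helin : e.Nodup ∧ ∀ a, a ∈ e := ⟨List.nodup_finRange m, List.mem_finRange⟩
    obtain ⟨ψ, hψ⟩ := exists_perm_map hrlin.1 hrlin.2 helin.1 helin.2
    refine ⟨permD ψ D, ⟨masp_map ψ hmasp, ?_⟩, orbit_permD ψ D, ?_, ?_⟩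
    · have := extremal_map ψ hQ
      rwa [hψ] at this
    · intro D' hD' horb
      have hD'mem : D' ∈ Orbit D := by
        rw [← horb]; exact mem_orbit_self D'
      obtain ⟨φ, hφ⟩ := hD'mem
      rw [permD_eq_image] at hφ
      have hepull : IsExtremal D (e.map φ.symm) := by
        have := extremal_map φ.symm hD'.2
        rwa [← hφ, permD_symm_permD] at this
      rcases huniq _ hepull with h' | h'
      · left
        rw [← heP] at h'
        have h1 : e.map φ = e := by
          have h0 := congrArg (fun l : List (Fin m) => l.map φ) h'
          simp only [map_symm_map] at h0
          exact h0.symm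
        have : φ = 1 := unique_perm_map helin.2 (h1.trans (map_perm_one e).symm)
        rw [← hφ, this, permD_one]
      · right
        have h1 : e.map (φ.symm.trans ψ) = e := by
          rw [Equiv.coe_trans, ← List.map_map, h', hψ]
        have h2 : φ.symm.trans ψ = 1 := unique_perm_map helin.2 (h1.trans (map_perm_one e).symm)
        have h3 : ψ = φ := by
          apply Equiv.ext
          intro a
          have := Equiv.ext_iff.mp h2 (φ a)
          simpa using this
        rw [← hφ, h3]
    · constructor
      · intro h
        refine ⟨Q, e, ψ, ?_, hQ, (by rw [heP]; exact hP), ?_, hψ, ?_⟩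
        · intro hcon
          exact hPQ (heP.symm.trans hcon.symm)
        · intro l hl
          rcases huniq l hl with h' | h'
          · right; rw [h', ← heP]
          · left; exact h'
        · rw [permD_eq_image]; exact h
      · rintro ⟨P₀, Q₀, θ, hP₀Q₀, hP₀, hQ₀, huniq₀, hmapθ, himgθ⟩
        have hgetψ : ∀ θ' : Equiv.Perm (Fin m), Q.map θ' = e →
            (fun l : List (Fin m) => l.map θ') '' D = D → permD ψ D = D := by
          intro θ' hmap himg
          have h6 : θ' = ψ := unique_perm_map hrlin.2 (hmap.trans hψ.symm)
          rw [← h6, ← permD_eq_image, himg]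
        rcases huniq P₀ hP₀ with hP₀e | hP₀r
        · -- P₀ = P = e, so Q₀ = Q
          have hQ₀r : Q₀ = Q := by
            rcases huniq Q₀ hQ₀ with h' | h'
            · exact absurd (hP₀e.trans h'.symm) hP₀Q₀
            · exact h'
          -- θ maps e to Q ; use θ.symm
          have hmap2 : Q.map θ.symm = e := by
            have h5 : P₀ = Q₀.map θ.symm := by
              have h4 := congrArg (fun l : List (Fin m) => l.map θ.symm) hmapθ
              simpa [map_map_symm] using h4
            rw [← hQ₀r, ← h5, hP₀e]
            exact heP.symm
          have himg2 : (fun l : List (Fin m) => l.map θ.symm) '' D = D := by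
            conv_lhs => rw [← himgθ]
            exact permD_symm_permD θ D
          exact hgetψ θ.symm hmap2 himg2
        · -- P₀ = Q
          have hQ₀e : Q₀ = e := by
            rcases huniq Q₀ hQ₀ with h' | h'
            · rw [h', ← heP]
            · exact absurd (hP₀r.trans h'.symm) hP₀Q₀
          have hmap2 : Q.map θ = e := by rw [← hP₀r, hmapθ, hQ₀e]
          exact hgetψ θ hmap2 himgθ
  rcases huniq _ hext with he | he
  · exact main P Q hP hQ hPQ huniq he
  · exact main Q P hQ hP (Ne.symm hPQ) (fun l hl => (huniq l hl).symm) he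

end Orbits

section Count
variable {m : ℕ}

lemma linSet_finite (m : ℕ) : {l : List (Fin m) | IsLinOrd Finset.univ l}.Finite := by
  apply Set.Finite.subset (List.finRange m).permutations.toFinset.finite_toSet
  intro l hl
  simp only [Finset.mem_coe, List.mem_toFinset, List.mem_permutations]
  exact (List.perm_ext_iff_of_nodup hl.1 (List.nodup_finRange m)).mpr
    (fun a => ⟨fun _ => List.mem_finRange a, fun _ => (hl.2 a).mpr (Finset.mem_univ a)⟩)

lemma masp_subset_lin {D : Set (List (Fin m))} (h : IsMaxArrowSP Finset.univ D) :
    D ⊆ {l : List (Fin m) | IsLinOrd Finset.univ l} := fun l hl => h.1.1.1 l hl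

lemma xset_finite (m : ℕ) : (Xset m).Finite :=
  ((linSet_finite m).finite_subsets).subset (fun _ hD => masp_subset_lin hD.1)

lemma maspSet_finite (m : ℕ) : {D : Set (List (Fin m)) | IsMaxArrowSP Finset.univ D}.Finite :=
  ((linSet_finite m).finite_subsets).subset (fun _ hD => masp_subset_lin hD)

lemma classes_finite (m : ℕ) : (Classes m).Finite := by
  apply Set.Finite.subset ((maspSet_finite m).image Orbit)
  rintro C ⟨D, hD, rfl⟩
  exact ⟨D, hD, rfl⟩

lemma spclasses_subset (m : ℕ) : SPClasses m ⊆ Classes m := by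
  rintro C ⟨D, h1, _, h3⟩
  exact ⟨D, h1, h3⟩

lemma spclasses_finite (m : ℕ) : (SPClasses m).Finite :=
  (classes_finite m).subset (spclasses_subset m)

lemma exists_X_rep (hm : 3 ≤ m) {D₀ : Set (List (Fin m))} (h : IsMaxArrowSP Finset.univ D₀) :
    ∃ D ∈ Xset m, Orbit D = Orbit D₀ := by
  obtain ⟨P, Q, hP, _, _, _⟩ := struct' hm h
  have hPlin := lin_of_mem h hP.1
  obtain ⟨φ, hφ⟩ := exists_perm_map hPlin.1 hPlin.2
    (List.nodup_finRange m) List.mem_finRange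
  refine ⟨permD φ D₀, ⟨masp_map φ h, ?_⟩, orbit_permD φ D₀⟩
  have := extremal_map φ hP
  rwa [hφ] at this

lemma class_sp {D : Set (List (Fin m))} (hD : D ∈ Xset m) :
    Orbit D ∈ SPClasses m ↔ SelfPaired D := by
  constructor
  · rintro ⟨D₀, h₀, sp₀, hC⟩
    have hDmem : D ∈ Orbit D₀ := by rw [← hC]; exact mem_orbit_self D
    obtain ⟨φ, hφ⟩ := hDmem
    rw [permD_eq_image] at hφ
    rw [← hφ]
    exact selfpaired_map φ sp₀
  · intro sp
    exact ⟨D, hD.1, sp, rfl⟩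

lemma count_eq (hm : 3 ≤ m) :
    numMaxASP m + numSPClasses m = 2 * numIsoClasses m ∧
      numSPClasses m ≤ numIsoClasses m := by
  classical
  have hXfin := xset_finite m
  have hCfin := classes_finite m
  have hSPfin := spclasses_finite m
  set s := hXfin.toFinset with hs
  set t := hCfin.toFinset with ht
  set u := hSPfin.toFinset with hu
  have hut : u ⊆ t := by
    intro c hc
    rw [hu, Set.Finite.mem_toFinset] at hc
    rw [ht, Set.Finite.mem_toFinset]
    exact spclasses_subset m hc
  have hmapst : ∀ D ∈ s, Orbit D ∈ t := by
    intro D hD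
    rw [hs, Set.Finite.mem_toFinset] at hD
    rw [ht, Set.Finite.mem_toFinset]
    exact ⟨D, hD.1, rfl⟩
  have hsum := Finset.card_eq_sum_card_fiberwise hmapst
  have fib : ∀ c ∈ t, (s.filter (fun D => Orbit D = c)).card = if c ∈ u then 1 else 2 := by
    intro c hc
    rw [ht, Set.Finite.mem_toFinset] at hc
    obtain ⟨D₀, hD₀, rfl⟩ := hc
    obtain ⟨D, hDX, hDorb⟩ := exists_X_rep hm hD₀
    obtain ⟨D₂, hD₂X, hD₂orb, hfib, hsp⟩ := key_fiber hm hDX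
    have hcu : Orbit D₀ ∈ u ↔ SelfPaired D := by
      rw [hu, Set.Finite.mem_toFinset, ← hDorb]
      exact class_sp hDX
    by_cases hspD : SelfPaired D
    · rw [if_pos (hcu.mpr hspD)]
      rw [Finset.card_eq_one]
      refine ⟨D, ?_⟩
      ext x
      simp only [Finset.mem_filter, Finset.mem_singleton]
      constructor
      · rintro ⟨hxs, hxo⟩
        rw [hs, Set.Finite.mem_toFinset] at hxs
        rcases hfib x hxs (hxo.trans hDorb.symm) with h' | h'
        · exact h'
        · rw [h', hsp.mpr hspD]
      · rintro rfl
        exact ⟨by rw [hs, Set.Finite.mem_toFinset]; exact hDX, hDorb⟩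
    · rw [if_neg (fun h => hspD (hcu.mp h))]
      have hne : D ≠ D₂ := fun h => hspD (hsp.mp h.symm)
      have : s.filter (fun E => Orbit E = Orbit D₀) = {D, D₂} := by
        ext x
        simp only [Finset.mem_filter, Finset.mem_insert, Finset.mem_singleton]
        constructor
        · rintro ⟨hxs, hxo⟩
          rw [hs, Set.Finite.mem_toFinset] at hxs
          exact hfib x hxs (hxo.trans hDorb.symm)
        · rintro (rfl | rfl)
          · exact ⟨by rw [hs, Set.Finite.mem_toFinset]; exact hDX, hDorb⟩
          · exact ⟨by rw [hs, Set.Finite.mem_toFinset]; exact hD₂X, hD₂orb.trans hDorb⟩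
      rw [this, Finset.card_insert_of_notMem (by simp [hne]), Finset.card_singleton]
  have h2 : s.card = ∑ c ∈ t, (if c ∈ u then 1 else 2) := by
    rw [hsum]
    exact Finset.sum_congr rfl fib
  have h3 : u.card = ∑ c ∈ t, (if c ∈ u then 1 else 0) := by
    have hfil : t.filter (fun c => c ∈ u) = u := by
      ext c
      simp only [Finset.mem_filter]
      exact ⟨fun h => h.2, fun h => ⟨hut h, h⟩⟩
    have h5 := Finset.card_filter (fun c => c ∈ u) t
    rw [hfil] at h5
    exact h5.symm ▸ h5
  have h4 : s.card + u.card = 2 * t.card := by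
    rw [h2, h3, ← Finset.sum_add_distrib]
    have : ∀ c ∈ t, ((if c ∈ u then 1 else 2) + (if c ∈ u then 1 else 0)) = 2 := by
      intro c _
      by_cases h : c ∈ u <;> simp [h]
    rw [Finset.sum_congr rfl this, Finset.sum_const, smul_eq_mul, mul_comm]
  have hX : numMaxASP m = s.card := Set.ncard_eq_toFinset_card (Xset m) hXfin
  have hC : numIsoClasses m = t.card := Set.ncard_eq_toFinset_card (Classes m) hCfin
  have hSP : numSPClasses m = u.card := Set.ncard_eq_toFinset_card (SPClasses m) hSPfin
  refine ⟨by rw [hX, hC, hSP]; exact h4, by rw [hC, hSP]; exact Finset.card_le_card hut⟩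

end Count

section ThreeCase

def NB3 (b : Fin 3) : Set (List (Fin 3)) :=
  {l | IsLinOrd Finset.univ l ∧ l.getLast? ≠ some b}

lemma univ3 {a b c : Fin 3} (hab : a ≠ b) (hac : a ≠ c) (hbc : b ≠ c) :
    ({a, b, c} : Finset (Fin 3)) = Finset.univ := by
  apply Finset.eq_univ_of_card
  rw [Finset.card_insert_of_notMem (by simp [hab, hac]),
    Finset.card_insert_of_notMem (by simp [hbc]), Finset.card_singleton]
  simp

lemma restrict3 {a b c : Fin 3} (hab : a ≠ b) (hac : a ≠ c) (hbc : b ≠ c)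
    (v : List (Fin 3)) : restrictList v {a, b, c} = v := by
  rw [univ3 hab hac hbc, restrict_univ]

lemma nodup3 {x y z : Fin 3} (h : ([x, y, z] : List (Fin 3)).Nodup) :
    x ≠ y ∧ x ≠ z ∧ y ≠ z := by
  simp only [List.nodup_cons, List.mem_cons, List.not_mem_nil, or_false, List.mem_singleton,
    List.nodup_nil, and_true, not_or] at h
  exact ⟨by tauto, by tauto, by tauto⟩

lemma linorder3 {x y z : Fin 3} (hxy : x ≠ y) (hxz : x ≠ z) (hyz : y ≠ z) :
    IsLinOrd Finset.univ [x, y, z] := by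
  refine ⟨by simp [hxy, hxz, hyz], fun a => ⟨fun _ => Finset.mem_univ a, fun _ => ?_⟩⟩
  have : a ∈ ({x, y, z} : Finset (Fin 3)) := by rw [univ3 hxy hxz hyz]; exact Finset.mem_univ a
  simpa using this

lemma lin3 {l : List (Fin 3)} (h : IsLinOrd Finset.univ l) :
    l = [0,1,2] ∨ l = [0,2,1] ∨ l = [1,0,2] ∨ l = [1,2,0] ∨ l = [2,0,1] ∨ l = [2,1,0] := by
  have hlen : l.length = 3 := by rw [linOrd_length h]; simp
  obtain ⟨x, y, z, rfl⟩ := List.length_eq_three.mp hlen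
  obtain ⟨hxy, hxz, hyz⟩ := nodup3 h.1
  fin_cases x <;> fin_cases y <;> fin_cases z <;> simp_all

lemma NB3_CD (b : Fin 3) : IsCondorcetDomain Finset.univ (NB3 b) := by
  refine ⟨fun l hl => hl.1, ?_⟩
  rintro ⟨x, y, z, hxy, hxz, hyz, v₁, hv₁, v₂, hv₂, v₃, hv₃, p₁, p₂, p₃⟩
  rw [restrict3 hxy hxz hyz] at p₁ p₂ p₃
  apply hv₃.2
  rw [p₃]
  have h1 : z ≠ b := fun h => hv₁.2 (by rw [p₁]; simp [h])
  have h2 : x ≠ b := fun h => hv₂.2 (by rw [p₂]; simp [h])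
  have hy : y = b := by
    have hbu : b ∈ ({x, y, z} : Finset (Fin 3)) := by
      rw [univ3 hxy hxz hyz]; exact Finset.mem_univ b
    simp only [Finset.mem_insert, Finset.mem_singleton] at hbu
    rcases hbu with h | h | h
    · exact absurd h.symm h2
    · exact h.symm
    · exact absurd h.symm h1
  simp [hy]

lemma NB3_max (b : Fin 3) : IsMaxCondorcetDomain Finset.univ (NB3 b) := by
  refine ⟨NB3_CD b, ?_⟩
  intro D' hD' hsub
  apply Set.Subset.antisymm _ hsub
  intro l hl
  have hlin : IsLinOrd Finset.univ l := hD'.1 l hl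
  refine ⟨hlin, ?_⟩
  intro hlast
  have hlen : l.length = 3 := by rw [linOrd_length hlin]; simp
  obtain ⟨x, y, z, rfl⟩ := List.length_eq_three.mp hlen
  have hzb : z = b := by simpa [getLast?_cons_ne_nil] using hlast
  obtain ⟨hxy, hxz, hyz⟩ := nodup3 hlin.1
  have hc1 : ([z, x, y] : List (Fin 3)) ∈ NB3 b := by
    refine ⟨linorder3 (Ne.symm hxz) (Ne.symm hyz) hxy, ?_⟩
    intro hcon
    have : y = b := by simpa [getLast?_cons_ne_nil] using hcon
    exact hyz (this.trans hzb.symm)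
  have hc2 : ([y, z, x] : List (Fin 3)) ∈ NB3 b := by
    refine ⟨linorder3 hyz (Ne.symm hxy) (Ne.symm hxz), ?_⟩
    intro hcon
    have : x = b := by simpa [getLast?_cons_ne_nil] using hcon
    exact hxz (this.trans hzb.symm)
  exact hD'.2 ⟨x, y, z, hxy, hxz, hyz, [x,y,z], hl, [y,z,x], hsub hc2, [z,x,y], hsub hc1,
    restrict3 hxy hxz hyz _, restrict3 hxy hxz hyz _, restrict3 hxy hxz hyz _⟩

lemma NB3_SP (b : Fin 3) : ∀ T : Finset (Fin 3), T ⊆ Finset.univ → T.card = 3 →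
    ∃ x : Fin 3, NeverBottom (NB3 b) T x := by
  intro T _ hT3
  have hTu : T = Finset.univ := Finset.eq_univ_of_card T (by simp [hT3])
  refine ⟨b, by rw [hTu]; exact Finset.mem_univ b, ?_⟩
  intro l hl
  rw [hTu, restrict_univ]
  exact hl.2

lemma NB3_masp (b : Fin 3) : IsMaxArrowSP Finset.univ (NB3 b) :=
  ⟨NB3_max b, ⟨NB3_CD b, NB3_SP b⟩⟩

lemma masp3_eq_NB3 {D : Set (List (Fin 3))} (hD : IsMaxArrowSP Finset.univ D) :
    ∃ b, D = NB3 b := by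
  obtain ⟨x, _, hx⟩ := hD.2.2 Finset.univ (subset_refl _) (by simp)
  have hsub : D ⊆ NB3 x := by
    intro l hl
    refine ⟨hD.1.1.1 l hl, ?_⟩
    have := hx l hl
    rwa [restrict_univ] at this
  exact ⟨x, (hD.1.2 (NB3 x) (NB3_CD x) hsub).symm⟩

lemma permD_NB3 (φ : Equiv.Perm (Fin 3)) (b : Fin 3) : permD φ (NB3 b) = NB3 (φ b) := by
  ext w
  constructor
  · rintro ⟨l, hl, rfl⟩
    refine ⟨lin_map φ hl.1, ?_⟩
    rw [List.getLast?_map]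
    intro hcon
    obtain ⟨y, hy, hyb⟩ := Option.map_eq_some_iff.mp hcon
    exact hl.2 (by rw [hy, φ.injective hyb])
  · intro hw
    refine ⟨w.map φ.symm, ⟨lin_map φ.symm hw.1, ?_⟩, map_symm_map φ w⟩
    rw [List.getLast?_map]
    intro hcon
    obtain ⟨y, hy, hyb⟩ := Option.map_eq_some_iff.mp hcon
    apply hw.2
    rw [hy]
    have : y = φ b := by
      have := congrArg φ hyb
      simpa using this
    rw [this]

lemma orbit_NB3 (b b' : Fin 3) : Orbit (NB3 b) = Orbit (NB3 b') := by
  have h : permD (Equiv.swap b b') (NB3 b') = NB3 b := by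
    rw [permD_NB3, Equiv.swap_apply_right]
  rw [← h, orbit_permD]

lemma classes3 : Classes 3 = {Orbit (NB3 1)} := by
  ext C
  constructor
  · rintro ⟨D, hD, rfl⟩
    obtain ⟨b, rfl⟩ := masp3_eq_NB3 hD
    exact orbit_NB3 b 1
  · rintro rfl
    exact ⟨NB3 1, NB3_masp 1, rfl⟩

lemma term3 {a : Fin 3} (h : TerminalElt (NB3 1) a) : a = 0 ∨ a = 2 := by
  obtain ⟨l, hl, hla⟩ := h
  have ha1 : a ≠ 1 := fun hcon => hl.2 (hcon ▸ hla)
  fin_cases a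
  · exact Or.inl rfl
  · exact absurd rfl ha1
  · exact Or.inr rfl

lemma selfpaired_NB3 : SelfPaired (NB3 1) := by
  have hP : ([0,1,2] : List (Fin 3)) ∈ NB3 1 :=
    ⟨linorder3 (by decide) (by decide) (by decide), by decide⟩
  have hQ : ([2,1,0] : List (Fin 3)) ∈ NB3 1 :=
    ⟨linorder3 (by decide) (by decide) (by decide), by decide⟩
  have hterm0 : TerminalElt (NB3 1) 0 := ⟨[2,1,0], hQ, by decide⟩
  have hterm2 : TerminalElt (NB3 1) 2 := ⟨[0,1,2], hP, by decide⟩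
  have hPe : IsExtremal (NB3 1) [0,1,2] :=
    ⟨hP, 0, 2, by decide, rfl, by decide, hterm0, hterm2, fun a ha => term3 ha⟩
  have hQe : IsExtremal (NB3 1) [2,1,0] :=
    ⟨hQ, 2, 0, by decide, rfl, by decide, hterm2, hterm0, fun a ha => (term3 ha).symm⟩
  refine ⟨[0,1,2], [2,1,0], Equiv.swap 0 2, by decide, hPe, hQe, ?_, ?_, ?_⟩
  · rintro l ⟨hlmem, s, t, hst, hh, hlast, hs, ht, hall⟩
    rcases lin3 hlmem.1 with rfl | rfl | rfl | rfl | rfl | rfl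
    · exact Or.inl rfl
    · exact absurd (by decide : ([0,2,1] : List (Fin 3)).getLast? = some 1) hlmem.2
    · have hs1 : s = 1 := by simpa using hh.symm
      rcases term3 hs with h | h <;> rw [hs1] at h <;> exact absurd h (by decide)
    · have hs1 : s = 1 := by simpa using hh.symm
      rcases term3 hs with h | h <;> rw [hs1] at h <;> exact absurd h (by decide)
    · exact absurd (by decide : ([2,0,1] : List (Fin 3)).getLast? = some 1) hlmem.2
    · exact Or.inr rfl
  · decide
  · show permD (Equiv.swap 0 2) (NB3 1) = NB3 1
    rw [permD_NB3, show (Equiv.swap 0 2 : Equiv.Perm (Fin 3)) 1 = 1 by decide]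

lemma spclasses3 : SPClasses 3 = {Orbit (NB3 1)} := by
  ext C
  constructor
  · rintro ⟨D, hD, _, rfl⟩
    obtain ⟨b, rfl⟩ := masp3_eq_NB3 hD
    exact orbit_NB3 b 1
  · rintro rfl
    exact ⟨NB3 1, NB3_masp 1, selfpaired_NB3, rfl⟩

end ThreeCase


/-- `N(3) = SP(3) = 1`, and for `m ≥ 4`: `N(m) = (P(m) + SP(m)) / 2`, hence
`P(m)/2 ≤ N(m) ≤ P(m)`. -/
theorem stmt_16 :
    numIsoClasses 3 = 1 ∧ numSPClasses 3 = 1 ∧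
    ∀ m : ℕ, 4 ≤ m →
      2 * numIsoClasses m = numMaxASP m + numSPClasses m ∧
      numMaxASP m ≤ 2 * numIsoClasses m ∧
      numIsoClasses m ≤ numMaxASP m := by
  have hN3 : numIsoClasses 3 = 1 := by
    show (Classes 3).ncard = 1
    rw [classes3]
    exact Set.ncard_singleton _
  have hSP3 : numSPClasses 3 = 1 := by
    show (SPClasses 3).ncard = 1
    rw [spclasses3]
    exact Set.ncard_singleton _
  refine ⟨hN3, hSP3, ?_⟩
  intro m hm
  obtain ⟨heq, hle⟩ := count_eq (by omega : 3 ≤ m)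
  exact ⟨heq.symm, by omega, by omega⟩
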